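/- For every real b > 0, every real z, and every natural number r, one has (b² + z²)^{−(r+1)} = (1/(r!)²) · ∫₀^∞ ∫₀^∞ e^{i(α−β)z} · e^{−(α+β)b} · (αβ)^r dα dβ, where the double integral is a complex-valued Lebesgue integral over (0,∞) × (0,∞) (its value is real). -/

import Mathlib

open MeasureTheory Set Filter Complex

lemma aux_integrable (c : ℂ) (hc : 0 < c.re) (r : ℕ) :
    IntegrableOn (fun t : ℝ => (t : ℂ) ^ r * Complex.exp (-(c * t))) (Ioi 0) := by
  have hg : IntegrableOn (fun t : ℝ => t ^ (r : ℝ) * Real.exp (-c.re * t ^ (1:ℝ))) (Ioi 0) :=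
    integrableOn_rpow_mul_exp_neg_mul_rpow
      (neg_one_lt_zero.trans_le (Nat.cast_nonneg r)) one_pos hc
  refine Integrable.mono' hg ?_ ?_
  · apply Measurable.aestronglyMeasurable
    fun_prop
  · filter_upwards [ae_restrict_mem measurableSet_Ioi] with t ht
    rw [norm_mul, Complex.norm_exp, norm_pow,
      Complex.norm_real, Real.norm_eq_abs, abs_of_pos ht, ← Real.rpow_natCast t r, Real.rpow_one]
    apply le_of_eq
    congr 1
    simp [neg_re, mul_re]


lemma aux_deriv (c : ℂ) (hc : c ≠ 0) (n : ℕ) (t : ℝ) :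
    HasDerivAt (fun t : ℝ => -(t : ℂ) ^ (n+1) * Complex.exp (-(c * t)) / c)
      ((t : ℂ) ^ (n+1) * Complex.exp (-(c * t))
        - ((n+1 : ℕ) / c) * ((t : ℂ) ^ n * Complex.exp (-(c * t)))) t := by
  have hor : HasDerivAt (fun t : ℝ => (t : ℂ)) 1 t := by
    simpa using (hasDerivAt_id t).ofReal_comp
  have hpow : HasDerivAt (fun t : ℝ => (t : ℂ) ^ (n+1)) ((n+1) * (t : ℂ) ^ n) t := by
    have := (hasDerivAt_pow (n+1) t).ofReal_comp
    push_cast at this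
    simpa using this
  have hexp : HasDerivAt (fun t : ℝ => Complex.exp (-(c * t)))
      (-c * Complex.exp (-(c * t))) t := by
    have := ((hor.const_mul c).neg).cexp
    simpa [mul_comm] using this
  have := ((hpow.neg.mul hexp).div_const c)
  refine this.congr_deriv ?_
  simp only [Pi.neg_apply, Nat.cast_add, Nat.cast_one]
  field_simp
  ring

lemma aux_tendsto (c : ℂ) (hc : 0 < c.re) (n : ℕ) :
    Tendsto (fun t : ℝ => -(t : ℂ) ^ n * Complex.exp (-(c * t)) / c) atTop (nhds 0) := by
  rw [tendsto_zero_iff_norm_tendsto_zero]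
  have h : ∀ t : ℝ, 0 < t → ‖-(t : ℂ) ^ n * Complex.exp (-(c * t)) / c‖
      = (1 / c.re ^ n / ‖c‖) * ((c.re * t) ^ n * Real.exp (-(c.re * t))) := by
    intro t ht
    rw [norm_div, norm_mul, norm_neg, norm_pow, Complex.norm_real, Real.norm_eq_abs,
      Complex.norm_exp, abs_of_pos ht, mul_pow]
    have : (-(c * (t:ℂ))).re = -(c.re * t) := by simp [neg_re, mul_re]
    rw [this]
    have hcre : c.re ≠ 0 := ne_of_gt hc
    rw [show (1 / c.re ^ n / ‖c‖ * (c.re ^ n * t ^ n * Real.exp (-(c.re * t))))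
        = (c.re ^ n / c.re ^ n) * (t ^ n * Real.exp (-(c.re * t)) / ‖c‖) by ring,
      div_self (pow_ne_zero n hcre), one_mul]
  have h2 : Tendsto (fun t : ℝ => (1 / c.re ^ n / ‖c‖) *
      ((c.re * t) ^ n * Real.exp (-(c.re * t)))) atTop (nhds 0) := by
    rw [show (0:ℝ) = (1 / c.re ^ n / ‖c‖) * 0 by ring]
    exact Tendsto.const_mul _
      ((Real.tendsto_pow_mul_exp_neg_atTop_nhds_zero n).comp
        (tendsto_id.const_mul_atTop hc))
  refine h2.congr' ?_
  filter_upwards [eventually_gt_atTop 0] with t ht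
  exact (h t ht).symm

lemma laplace_pow (c : ℂ) (hc : 0 < c.re) (r : ℕ) :
    ∫ t in Ioi (0:ℝ), (t : ℂ) ^ r * Complex.exp (-(c * t))
      = (r.factorial : ℂ) / c ^ (r+1) := by
  have hc0 : c ≠ 0 := fun h => by simp [h] at hc
  induction r with
  | zero =>
    have hderiv : ∀ t ∈ Ici (0:ℝ), HasDerivAt (fun t : ℝ => -Complex.exp (-(c * t)) / c)
        ((t : ℂ) ^ 0 * Complex.exp (-(c * t))) t := by
      intro t _
      have hor : HasDerivAt (fun t : ℝ => (t : ℂ)) 1 t := by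
        simpa using (hasDerivAt_id t).ofReal_comp
      have hexp := ((hor.const_mul c).neg).cexp
      have := hexp.neg.div_const c
      refine this.congr_deriv ?_
      simp only [Pi.neg_apply]
      field_simp
    have htend : Filter.Tendsto (fun t : ℝ => -Complex.exp (-(c * t)) / c)
        Filter.atTop (nhds 0) := by
      have := aux_tendsto c hc 0
      simpa using this
    rw [MeasureTheory.integral_Ioi_of_hasDerivAt_of_tendsto' hderiv
      ((aux_integrable c hc 0).congr_fun (fun t _ => by simp) measurableSet_Ioi)
      htend]
    simp only [zero_sub, Complex.ofReal_zero, mul_zero, neg_zero, Complex.exp_zero]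
    rw [pow_one]
    simp [neg_div, Nat.factorial, one_div]
  | succ n ih =>
    have hint1 := aux_integrable c hc (n+1)
    have hint0 := aux_integrable c hc n
    have h := MeasureTheory.integral_Ioi_of_hasDerivAt_of_tendsto'
      (f := fun t : ℝ => -(t : ℂ) ^ (n+1) * Complex.exp (-(c * t)) / c)
      (fun t _ => aux_deriv c hc0 n t)
      (hint1.sub (hint0.const_mul _))
      (aux_tendsto c hc (n+1))
    rw [MeasureTheory.integral_sub hint1 (hint0.const_mul _),
      MeasureTheory.integral_const_mul, ih] at h
    rw [show (0:ℂ) - (-((0:ℝ):ℂ) ^ (n+1) * Complex.exp (-(c * ((0:ℝ):ℂ))) / c) = 0 by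
      norm_num] at h
    have h2 := sub_eq_zero.mp h
    rw [h2, Nat.factorial_succ]
    push_cast
    rw [div_mul_div_comm, pow_succ]
    ring

/-- For `b > 0`, `z ∈ ℝ` and `r ∈ ℕ`,
`(b² + z²)^{−(r+1)} = (1/(r!)²) ∫₀^∞ ∫₀^∞ e^{i(α−β)z} e^{−(α+β)b} (αβ)^r dα dβ`. -/
theorem inv_pow_eq_double_laplace (b : ℝ) (hb : 0 < b) (z : ℝ) (r : ℕ) :
    (((b ^ 2 + z ^ 2 : ℝ) : ℂ)) ^ (-(r + 1 : ℤ)) =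
      (1 / ((r.factorial : ℂ)) ^ 2) *
        ∫ β in Set.Ioi (0 : ℝ), ∫ α in Set.Ioi (0 : ℝ),
          Complex.exp (Complex.I * ((α : ℂ) - (β : ℂ)) * (z : ℂ)) *
            Complex.exp (-((α : ℂ) + (β : ℂ)) * (b : ℂ)) *
            ((α : ℂ) * (β : ℂ)) ^ r := by
  set c₁ : ℂ := (b : ℂ) - Complex.I * z with hc₁
  set c₂ : ℂ := (b : ℂ) + Complex.I * z with hc₂
  have hre₁ : 0 < c₁.re := by simp [hc₁, Complex.sub_re, Complex.mul_re]; exact hb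
  have hre₂ : 0 < c₂.re := by simp [hc₂, Complex.add_re, Complex.mul_re]; exact hb
  -- rewrite the inner integral
  have hinner : ∀ β : ℝ, β ∈ Set.Ioi (0:ℝ) →
      (∫ α in Set.Ioi (0 : ℝ),
          Complex.exp (Complex.I * ((α : ℂ) - (β : ℂ)) * (z : ℂ)) *
            Complex.exp (-((α : ℂ) + (β : ℂ)) * (b : ℂ)) *
            ((α : ℂ) * (β : ℂ)) ^ r)
        = ((β : ℂ) ^ r * Complex.exp (-(c₂ * β))) * ((r.factorial : ℂ) / c₁ ^ (r+1)) := by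
    intro β _
    have : ∀ α : ℝ, α ∈ Set.Ioi (0:ℝ) →
        Complex.exp (Complex.I * ((α : ℂ) - (β : ℂ)) * (z : ℂ)) *
            Complex.exp (-((α : ℂ) + (β : ℂ)) * (b : ℂ)) *
            ((α : ℂ) * (β : ℂ)) ^ r
        = ((β : ℂ) ^ r * Complex.exp (-(c₂ * β))) * ((α : ℂ) ^ r * Complex.exp (-(c₁ * α))) := by
      intro α _
      rw [← Complex.exp_add]
      rw [mul_pow, show Complex.I * ((α : ℂ) - (β : ℂ)) * (z : ℂ) + -((α : ℂ) + (β : ℂ)) * (b : ℂ)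
        = -(c₂ * β) + -(c₁ * α) by rw [hc₁, hc₂]; ring, Complex.exp_add]
      ring
    rw [MeasureTheory.setIntegral_congr_fun measurableSet_Ioi this,
      MeasureTheory.integral_const_mul, laplace_pow c₁ hre₁ r]
  rw [MeasureTheory.setIntegral_congr_fun measurableSet_Ioi hinner,
    MeasureTheory.integral_mul_const, laplace_pow c₂ hre₂ r]
  have hfac : (r.factorial : ℂ) ≠ 0 := Nat.cast_ne_zero.mpr r.factorial_ne_zero
  have hc₁0 : c₁ ≠ 0 := fun h => by simp [h] at hre₁
  have hc₂0 : c₂ ≠ 0 := fun h => by simp [h] at hre₂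
  have hmul : c₁ * c₂ = ((b ^ 2 + z ^ 2 : ℝ) : ℂ) := by
    rw [hc₁, hc₂]
    push_cast
    ring_nf
    rw [Complex.I_sq]
    ring
  rw [zpow_neg, show ((r:ℤ) + 1) = ((r+1 : ℕ) : ℤ) by push_cast; ring, zpow_natCast, ← hmul,
    mul_pow]
  field_simp
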